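/- Let p ∈ (0,1), a > a_* := p^p·(1−p)^(1−p), let β < α be the two positive roots of Q_{p,a}, and let t ∈ ℝ. Then the following integration-by-parts identity holds (all improper integrals converging): (1−p)²·(1+t)·∫_β^α x^(1+t)/√(Q_{p,a}(x)) dx = a·(1+t−p)·∫_β^α x^(1+t−2p)/√(Q_{p,a}(x)) dx − t·p²·∫_β^α x^(t−1)/√(Q_{p,a}(x)) dx. -/

import Mathlib

open Real Set MeasureTheory intervalIntegral

/-- The function `Q_{p,a}(x) = a·x^(2(1−p)) − (1−p)²·x² − p²`. -/
noncomputable def Qfun (p a x : ℝ) : ℝ :=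
  a * x ^ (2 * (1 - p)) - (1 - p) ^ 2 * x ^ 2 - p ^ 2

lemma Qfun_sq (p a x : ℝ) (hx : 0 ≤ x) :
    Qfun p a x = a * (x ^ 2) ^ (1 - p) - (1 - p) ^ 2 * x ^ 2 - p ^ 2 := by
  unfold Qfun
  rw [Real.rpow_mul hx, show ((2:ℝ) = ((2:ℕ):ℝ)) by norm_num, Real.rpow_natCast]

set_option maxHeartbeats 1000000 in
lemma Qfun_lower (p a β α : ℝ) (hp0 : 0 < p) (hp1 : p < 1) (ha : 0 < a)
    (hβ : 0 < β) (hβα : β < α)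
    (hQβ : Qfun p a β = 0) (hQα : Qfun p a α = 0)
    (hQpos : ∀ x ∈ Set.Ioo β α, 0 < Qfun p a x) :
    ∃ C > 0, ∀ x ∈ Set.Icc β α, C * ((x - β) * (α - x)) ≤ Qfun p a x := by
  obtain ⟨Qt, hQtdef⟩ : ∃ Qt : ℝ → ℝ, Qt = fun y => a * y ^ (1 - p) - (1 - p) ^ 2 * y - p ^ 2 :=
    ⟨_, rfl⟩
  have hsq : ∀ x : ℝ, 0 ≤ x → Qfun p a x = Qt (x ^ 2) := by
    intro x hx; rw [hQtdef]; exact Qfun_sq p a x hx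
  obtain ⟨b, hbdef⟩ : ∃ b : ℝ, b = β ^ 2 := ⟨_, rfl⟩
  obtain ⟨c, hcdef⟩ : ∃ c : ℝ, c = α ^ 2 := ⟨_, rfl⟩
  have hbc : b < c := by rw [hbdef, hcdef]; nlinarith
  have hb0 : (0:ℝ) ≤ b := hbdef ▸ sq_nonneg β
  have hc0 : (0:ℝ) ≤ c := hcdef ▸ sq_nonneg α
  have hconc : ∀ y z u v : ℝ, 0 ≤ y → 0 ≤ z → 0 ≤ u → 0 ≤ v → u + v = 1 →
      u * Qt y + v * Qt z ≤ Qt (u * y + v * z) := by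
    intro y z u v hy hz hu hv huv
    have h := (Real.concaveOn_rpow (p := 1 - p) (by linarith) (by linarith)).2
      (Set.mem_Ici.2 hy) (Set.mem_Ici.2 hz) hu hv huv
    simp only [smul_eq_mul] at h
    simp only [hQtdef]
    nlinarith [mul_le_mul_of_nonneg_left h ha.le, sq_nonneg p]
  obtain ⟨m, hmdef⟩ : ∃ m : ℝ, m = (b + c) / 2 := ⟨_, rfl⟩
  have hm0 : (0:ℝ) ≤ m := by rw [hmdef]; linarith
  have hbm : b < m := by rw [hmdef]; linarith
  have hmc : m < c := by rw [hmdef]; linarith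
  have hQtb : Qt b = 0 := by rw [hbdef, ← hsq β hβ.le]; exact hQβ
  have hQtc : Qt c = 0 := by rw [hcdef, ← hsq α (by linarith)]; exact hQα
  have hQm : 0 < Qt m := by
    have hx0b : β < Real.sqrt m := by
      have h2 := Real.sqrt_lt_sqrt hb0 hbm
      rwa [hbdef, Real.sqrt_sq hβ.le] at h2
    have hx0a : Real.sqrt m < α := by
      have h2 := Real.sqrt_lt_sqrt hm0 hmc
      rwa [hcdef, Real.sqrt_sq (by linarith : (0:ℝ) ≤ α)] at h2
    have h := hQpos _ ⟨hx0b, hx0a⟩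
    rwa [hsq _ (Real.sqrt_nonneg m), Real.sq_sqrt hm0] at h
  obtain ⟨c0, hc0def⟩ : ∃ c0 : ℝ, c0 = Qt m / (c - b) ^ 2 := ⟨_, rfl⟩
  have hcb2 : (0:ℝ) < (c - b) ^ 2 := pow_pos (by linarith) 2
  have hc0pos : 0 < c0 := by rw [hc0def]; exact div_pos hQm hcb2
  have hQtm : Qt m = c0 * (c - b) ^ 2 := by
    rw [hc0def, div_mul_cancel₀ _ hcb2.ne']
  have hmb2 : m - b = (c - b) / 2 := by rw [hmdef]; ring
  have hcm2 : c - m = (c - b) / 2 := by rw [hmdef]; ring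
  have key : ∀ y ∈ Set.Icc b c, c0 * ((y - b) * (c - y)) ≤ Qt y := by
    intro y hy
    rcases le_total y m with hym | hmy
    · have hmb : (0:ℝ) < m - b := by linarith
      obtain ⟨v, hvdef⟩ : ∃ v : ℝ, v = (y - b) / (m - b) := ⟨_, rfl⟩
      have hv0 : 0 ≤ v := hvdef ▸ div_nonneg (by linarith [hy.1]) hmb.le
      have hv1 : v ≤ 1 := by rw [hvdef, div_le_one hmb]; linarith
      have hyeq : (1 - v) * b + v * m = y := by
        rw [hvdef]; field_simp; ring
      have h := hconc b m (1 - v) v hb0 hm0 (by linarith) hv0 (by ring)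
      rw [hyeq, hQtb, mul_zero, zero_add] at h
      have hveq : v * (m - b) = y - b := by rw [hvdef]; field_simp
      calc c0 * ((y - b) * (c - y)) = c0 * ((v * (m - b)) * (c - y)) := by rw [hveq]
        _ = c0 * v * (c - b) * (c - y) / 2 := by rw [hmb2]; ring
        _ ≤ v * (c0 * (c - b) ^ 2) := by
            nlinarith [mul_nonneg (mul_nonneg (mul_nonneg hc0pos.le hv0)
              (by linarith : (0:ℝ) ≤ c - b))
              (by linarith [hy.1] : (0:ℝ) ≤ (c - b) / 2 + (y - b) / 2)]
        _ = v * Qt m := by rw [hQtm]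
        _ ≤ Qt y := h
    · have hcm : (0:ℝ) < c - m := by linarith
      obtain ⟨v, hvdef⟩ : ∃ v : ℝ, v = (c - y) / (c - m) := ⟨_, rfl⟩
      have hv0 : 0 ≤ v := hvdef ▸ div_nonneg (by linarith [hy.2]) hcm.le
      have hv1 : v ≤ 1 := by rw [hvdef, div_le_one hcm]; linarith
      have hyeq : (1 - v) * c + v * m = y := by
        rw [hvdef]; field_simp; ring
      have h := hconc c m (1 - v) v hc0 hm0 (by linarith) hv0 (by ring)
      rw [hyeq, hQtc, mul_zero, zero_add] at h
      have hveq : v * (c - m) = c - y := by rw [hvdef]; field_simp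
      calc c0 * ((y - b) * (c - y)) = c0 * ((y - b) * (v * (c - m))) := by rw [hveq]
        _ = c0 * v * (c - b) * (y - b) / 2 := by rw [hcm2]; ring
        _ ≤ v * (c0 * (c - b) ^ 2) := by
            nlinarith [mul_nonneg (mul_nonneg (mul_nonneg hc0pos.le hv0)
              (by linarith : (0:ℝ) ≤ c - b))
              (by linarith [hy.2] : (0:ℝ) ≤ (c - b) / 2 + (c - y) / 2)]
        _ = v * Qt m := by rw [hQtm]
        _ ≤ Qt y := h
  refine ⟨c0 * (2 * β * (α + β)), mul_pos hc0pos (by nlinarith), fun x hx => ?_⟩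
  have hx0 : 0 < x := lt_of_lt_of_le hβ hx.1
  have hxa : x ≤ α := hx.2
  have hbx : β ≤ x := hx.1
  have h := key (x ^ 2) ⟨by rw [hbdef]; nlinarith, by rw [hcdef]; nlinarith⟩
  rw [hbdef, hcdef] at h
  rw [hsq x hx0.le]
  nlinarith [h, mul_nonneg (mul_nonneg (mul_nonneg hc0pos.le (sq_nonneg (x - β)))
    (sub_nonneg.2 hxa)) (show (0:ℝ) ≤ α + x + 2 * β by linarith)]

lemma ae_ne_pt (α : ℝ) (μ : Measure ℝ) [MeasureTheory.NullSingletonClass μ] : ∀ᵐ x : ℝ ∂μ, x ≠ α := by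
  rw [MeasureTheory.ae_iff]
  have h : {x : ℝ | ¬ x ≠ α} = {α} := by ext x; simp
  rw [h]; exact measure_singleton α

lemma Qfun_int (p a β α : ℝ) (hβ : 0 < β) (hβα : β < α)
    (C : ℝ) (hC : 0 < C) (hbound : ∀ x ∈ Set.Icc β α, C * ((x - β) * (α - x)) ≤ Qfun p a x)
    (s : ℝ) :
    IntervalIntegrable (fun x => x ^ s / Real.sqrt (Qfun p a x)) volume β α := by
  have hfm : Measurable fun x : ℝ => x ^ s / Real.sqrt (Qfun p a x) := by
    unfold Qfun; fun_prop
  have hmα : (β + α) / 2 < α := by linarith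
  have hβm : β < (β + α) / 2 := by linarith
  set m := (β + α) / 2 with hmdef
  have hB : ∀ x ∈ Set.Icc β α, x ^ s ≤ β ^ s + α ^ s := by
    intro x hx
    have hx0 : 0 < x := lt_of_lt_of_le hβ hx.1
    rcases le_total 0 s with hs | hs
    · have h1 := Real.rpow_le_rpow hx0.le hx.2 hs
      have h2 : (0:ℝ) < β ^ s := Real.rpow_pos_of_pos hβ s
      linarith
    · have h1 := Real.rpow_le_rpow_of_nonpos hβ hx.1 hs
      have h2 : (0:ℝ) < α ^ s := Real.rpow_pos_of_pos (by linarith) s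
      linarith
  have hBpos : 0 < β ^ s + α ^ s := by
    have := Real.rpow_pos_of_pos hβ s
    have := Real.rpow_pos_of_pos (show (0:ℝ) < α by linarith) s
    linarith
  -- first half
  have half1 : IntervalIntegrable (fun x => x ^ s / Real.sqrt (Qfun p a x)) volume β m := by
    have hD : 0 < Real.sqrt (C * (α - m)) :=
      Real.sqrt_pos.2 (mul_pos hC (by linarith))
    have hg : IntervalIntegrable
        (fun x => (β ^ s + α ^ s) / Real.sqrt (C * (α - m)) * (x - β) ^ (-(1/2) : ℝ))
        volume β m := by
      have h0 : IntervalIntegrable (fun x : ℝ => x ^ (-(1/2) : ℝ)) volume 0 (m - β) :=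
        intervalIntegrable_rpow' (by norm_num)
      have h1 := h0.comp_sub_right β
      rw [zero_add, sub_add_cancel] at h1
      exact h1.const_mul _
    apply IntervalIntegrable.mono_fun' hg hfm.aestronglyMeasurable
    rw [Set.uIoc_of_le hβm.le]
    refine (MeasureTheory.ae_restrict_iff' measurableSet_Ioc).2 (Filter.Eventually.of_forall ?_)
    intro x hx
    dsimp only
    have hx0 : 0 < x := lt_trans hβ hx.1
    have hxβ : 0 < x - β := by linarith [hx.1]
    have hxα : x < α := lt_of_le_of_lt hx.2 hmα
    have hQx : C * ((x - β) * (α - x)) ≤ Qfun p a x := hbound x ⟨hx.1.le, hxα.le⟩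
    have hsb : Real.sqrt (C * (α - m)) * Real.sqrt (x - β) ≤ Real.sqrt (Qfun p a x) := by
      rw [← Real.sqrt_mul (mul_pos hC (by linarith : (0:ℝ) < α - m)).le]
      apply Real.sqrt_le_sqrt
      nlinarith [hx.2, mul_nonneg hC.le hxβ.le]
    have hsb0 : (0:ℝ) < Real.sqrt (x - β) := Real.sqrt_pos.2 hxβ
    have hnorm : ‖x ^ s / Real.sqrt (Qfun p a x)‖ = x ^ s / Real.sqrt (Qfun p a x) := by
      rw [Real.norm_eq_abs, abs_of_nonneg]
      exact div_nonneg (Real.rpow_nonneg hx0.le s) (Real.sqrt_nonneg _)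
    rw [hnorm]
    calc x ^ s / Real.sqrt (Qfun p a x)
        ≤ (β ^ s + α ^ s) / (Real.sqrt (C * (α - m)) * Real.sqrt (x - β)) :=
          div_le_div₀ hBpos.le (hB x ⟨hx.1.le, hxα.le⟩) (mul_pos hD hsb0) hsb
      _ = (β ^ s + α ^ s) / Real.sqrt (C * (α - m)) * (x - β) ^ (-(1/2) : ℝ) := by
          rw [Real.rpow_neg hxβ.le, ← Real.sqrt_eq_rpow]
          field_simp
  have half2 : IntervalIntegrable (fun x => x ^ s / Real.sqrt (Qfun p a x)) volume m α := by
    have hD : 0 < Real.sqrt (C * (m - β)) :=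
      Real.sqrt_pos.2 (mul_pos hC (by linarith))
    have hg : IntervalIntegrable
        (fun x => (β ^ s + α ^ s) / Real.sqrt (C * (m - β)) * (α - x) ^ (-(1/2) : ℝ))
        volume m α := by
      have h0 : IntervalIntegrable (fun x : ℝ => x ^ (-(1/2) : ℝ)) volume 0 (α - m) :=
        intervalIntegrable_rpow' (by norm_num)
      have h1 := h0.comp_sub_left α
      rw [sub_zero, sub_sub_cancel] at h1
      exact (h1.symm).const_mul _
    apply IntervalIntegrable.mono_fun' hg hfm.aestronglyMeasurable
    rw [Set.uIoc_of_le hmα.le]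
    refine (MeasureTheory.ae_restrict_iff' measurableSet_Ioc).2 ?_
    refine (ae_ne_pt α volume).mono ?_
    intro x hne hx
    dsimp only
    have hxα : x < α := lt_of_le_of_ne hx.2 hne
    have hx0 : 0 < x := lt_trans hβ (lt_trans hβm hx.1)
    have hxβ : β < x := lt_trans hβm hx.1
    have hxα0 : 0 < α - x := by linarith
    have hQx : C * ((x - β) * (α - x)) ≤ Qfun p a x := hbound x ⟨hxβ.le, hxα.le⟩
    have hsb : Real.sqrt (C * (m - β)) * Real.sqrt (α - x) ≤ Real.sqrt (Qfun p a x) := by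
      rw [← Real.sqrt_mul (mul_pos hC (by linarith : (0:ℝ) < m - β)).le]
      apply Real.sqrt_le_sqrt
      nlinarith [hx.1, mul_nonneg hC.le hxα0.le]
    have hsb0 : (0:ℝ) < Real.sqrt (α - x) := Real.sqrt_pos.2 hxα0
    have hnorm : ‖x ^ s / Real.sqrt (Qfun p a x)‖ = x ^ s / Real.sqrt (Qfun p a x) := by
      rw [Real.norm_eq_abs, abs_of_nonneg]
      exact div_nonneg (Real.rpow_nonneg hx0.le s) (Real.sqrt_nonneg _)
    rw [hnorm]
    calc x ^ s / Real.sqrt (Qfun p a x)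
        ≤ (β ^ s + α ^ s) / (Real.sqrt (C * (m - β)) * Real.sqrt (α - x)) :=
          div_le_div₀ hBpos.le (hB x ⟨hxβ.le, hxα.le⟩) (mul_pos hD hsb0) hsb
      _ = (β ^ s + α ^ s) / Real.sqrt (C * (m - β)) * (α - x) ^ (-(1/2) : ℝ) := by
          rw [Real.rpow_neg hxα0.le, ← Real.sqrt_eq_rpow]
          field_simp
  exact half1.trans half2

set_option maxHeartbeats 1000000 in
/-- Integration-by-parts identity between the improper integrals
`∫_β^α x^s/√(Q_{p,a}(x)) dx`, where `β < α` are the two positive roots of `Q_{p,a}`: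
for every `t ∈ ℝ`,
`(1−p)²(1+t)·∫ x^(1+t)/√Q = a(1+t−p)·∫ x^(1+t−2p)/√Q − t·p²·∫ x^(t−1)/√Q`,
all three integrals converging. -/
theorem Qfun_integration_by_parts (p a t : ℝ) (hp : p ∈ Set.Ioo (0 : ℝ) 1)
    (ha : p ^ p * (1 - p) ^ (1 - p) < a)
    (β α : ℝ) (hβ : 0 < β) (hβα : β < α)
    (hQβ : Qfun p a β = 0) (hQα : Qfun p a α = 0)
    (hQpos : ∀ x ∈ Set.Ioo β α, 0 < Qfun p a x) :
    IntervalIntegrable (fun x => x ^ (1 + t) / Real.sqrt (Qfun p a x)) volume β α ∧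
    IntervalIntegrable (fun x => x ^ (1 + t - 2 * p) / Real.sqrt (Qfun p a x)) volume β α ∧
    IntervalIntegrable (fun x => x ^ (t - 1) / Real.sqrt (Qfun p a x)) volume β α ∧
    (1 - p) ^ 2 * (1 + t) * ∫ x in β..α, x ^ (1 + t) / Real.sqrt (Qfun p a x)
      = a * (1 + t - p) * (∫ x in β..α, x ^ (1 + t - 2 * p) / Real.sqrt (Qfun p a x))
        - t * p ^ 2 * ∫ x in β..α, x ^ (t - 1) / Real.sqrt (Qfun p a x) := by
  obtain ⟨hp0, hp1⟩ := hp
  have ha0 : 0 < a := lt_trans (mul_pos (Real.rpow_pos_of_pos hp0 p)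
    (Real.rpow_pos_of_pos (by linarith) (1 - p))) ha
  obtain ⟨C, hC, hbound⟩ := Qfun_lower p a β α hp0 hp1 ha0 hβ hβα hQβ hQα hQpos
  have hi1 := Qfun_int p a β α hβ hβα C hC hbound (1 + t)
  have hi2 := Qfun_int p a β α hβ hβα C hC hbound (1 + t - 2 * p)
  have hi3 := Qfun_int p a β α hβ hβα C hC hbound (t - 1)
  refine ⟨hi1, hi2, hi3, ?_⟩
  -- the combined integrand
  set g : ℝ → ℝ := fun x =>
    (a * (1 + t - p) * x ^ (1 + t - 2 * p) - (1 - p) ^ 2 * (1 + t) * x ^ (1 + t)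
      - t * p ^ 2 * x ^ (t - 1)) / Real.sqrt (Qfun p a x) with hgdef
  have hgeq : g = fun x => a * (1 + t - p) * (x ^ (1 + t - 2 * p) / Real.sqrt (Qfun p a x))
      - (1 - p) ^ 2 * (1 + t) * (x ^ (1 + t) / Real.sqrt (Qfun p a x))
      - t * p ^ 2 * (x ^ (t - 1) / Real.sqrt (Qfun p a x)) := by
    funext x
    simp only [hgdef]
    rw [sub_div, sub_div, mul_div_assoc, mul_div_assoc, mul_div_assoc]
  have hgint : IntervalIntegrable g volume β α := by
    rw [hgeq]
    exact ((hi2.const_mul _).sub (hi1.const_mul _)).sub (hi3.const_mul _)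
  -- the antiderivative
  set F : ℝ → ℝ := fun x => x ^ t * Real.sqrt (Qfun p a x) with hFdef
  have hQcont : ContinuousOn (Qfun p a) (Set.Icc β α) := by
    unfold Qfun
    refine ContinuousOn.sub (ContinuousOn.sub ?_ ?_) continuousOn_const
    · exact continuousOn_const.mul (ContinuousOn.rpow_const continuousOn_id
        fun x hx => Or.inl (ne_of_gt (lt_of_lt_of_le hβ hx.1)))
    · exact continuousOn_const.mul (continuousOn_pow 2)
  have hFcont : ContinuousOn F (Set.Icc β α) := by
    apply ContinuousOn.mul
    · exact ContinuousOn.rpow_const continuousOn_id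
        fun x hx => Or.inl (ne_of_gt (lt_of_lt_of_le hβ hx.1))
    · exact Real.continuous_sqrt.comp_continuousOn hQcont
  have hFβ : F β = 0 := by rw [hFdef]; simp [hQβ]
  have hFα : F α = 0 := by rw [hFdef]; simp [hQα]
  have hFderiv : ∀ x ∈ Set.Ioo β α, HasDerivWithinAt F (g x) (Set.Ioi x) x := by
    intro x hx
    have hx0 : 0 < x := lt_trans hβ hx.1
    have hQx : 0 < Qfun p a x := hQpos x hx
    have hS : 0 < Real.sqrt (Qfun p a x) := Real.sqrt_pos.2 hQx
    have hd1 : HasDerivAt (fun y : ℝ => y ^ t) (t * x ^ (t - 1)) x :=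
      Real.hasDerivAt_rpow_const (Or.inl hx0.ne')
    have hdQ : HasDerivAt (Qfun p a)
        (a * (2 * (1 - p) * x ^ (2 * (1 - p) - 1)) - (1 - p) ^ 2 * (2 * x)) x := by
      have h1 : HasDerivAt (fun y : ℝ => y ^ (2 * (1 - p)))
          (2 * (1 - p) * x ^ (2 * (1 - p) - 1)) x :=
        Real.hasDerivAt_rpow_const (Or.inl hx0.ne')
      have h2 : HasDerivAt (fun y : ℝ => y ^ 2) (2 * x) x := by
        simpa using hasDerivAt_pow 2 x
      exact ((h1.const_mul a).sub (h2.const_mul ((1 - p) ^ 2))).sub_const (p ^ 2)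
    have hdS : HasDerivAt (fun y => Real.sqrt (Qfun p a y))
        (1 / (2 * Real.sqrt (Qfun p a x)) *
          (a * (2 * (1 - p) * x ^ (2 * (1 - p) - 1)) - (1 - p) ^ 2 * (2 * x))) x :=
      (Real.hasDerivAt_sqrt hQx.ne').comp x hdQ
    have hdF := hd1.mul hdS
    refine (HasDerivAt.hasDerivWithinAt ?_)
    convert hdF using 1
    · rfl
    · rfl
    -- algebra
    have hS2 : Real.sqrt (Qfun p a x) ^ 2 = Qfun p a x := Real.sq_sqrt hQx.le
    have hu1 : x ^ t = x ^ (t - 1) * x := by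
      conv_lhs => rw [show t = (t - 1) + 1 by ring]
      rw [Real.rpow_add hx0, Real.rpow_one]
    have hu2 : x ^ (1 + t) = x ^ (t - 1) * x ^ 2 := by
      rw [show (1:ℝ) + t = (t - 1) + 2 by ring, Real.rpow_add hx0,
        show ((2:ℝ) = ((2:ℕ):ℝ)) by norm_num, Real.rpow_natCast]
    have hu3 : x ^ (1 + t - 2 * p) = x ^ (t - 1) * x ^ (2 * (1 - p)) := by
      rw [show (1:ℝ) + t - 2 * p = (t - 1) + 2 * (1 - p) by ring, Real.rpow_add hx0]
    have hu4 : x ^ (2 * (1 - p) - 1) * x = x ^ (2 * (1 - p)) := by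
      conv_rhs => rw [show 2 * (1 - p) = (2 * (1 - p) - 1) + 1 by ring]
      rw [Real.rpow_add hx0, Real.rpow_one]
    have hQx' : Real.sqrt (Qfun p a x) ^ 2
        = a * x ^ (2 * (1 - p)) - (1 - p) ^ 2 * x ^ 2 - p ^ 2 := by
      rw [hS2]; rfl
    simp only [hgdef]
    rw [hu1, hu2, hu3]
    field_simp
    linear_combination (-t) * hQx'
      + (-(1 - p) * a) * hu4
  have hFTC : ∫ x in β..α, g x = F α - F β :=
    intervalIntegral.integral_eq_sub_of_hasDeriv_right_of_le hβα.le hFcont hFderiv hgint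
  rw [hFα, hFβ, sub_zero] at hFTC
  have hsplit : ∫ x in β..α, g x
      = a * (1 + t - p) * (∫ x in β..α, x ^ (1 + t - 2 * p) / Real.sqrt (Qfun p a x))
        - (1 - p) ^ 2 * (1 + t) * (∫ x in β..α, x ^ (1 + t) / Real.sqrt (Qfun p a x))
        - t * p ^ 2 * (∫ x in β..α, x ^ (t - 1) / Real.sqrt (Qfun p a x)) := by
    rw [hgeq]
    rw [intervalIntegral.integral_sub ((hi2.const_mul _).sub (hi1.const_mul _))
      (hi3.const_mul _),
      intervalIntegral.integral_sub (hi2.const_mul _) (hi1.const_mul _),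
      intervalIntegral.integral_const_mul, intervalIntegral.integral_const_mul,
      intervalIntegral.integral_const_mul]
  rw [hsplit] at hFTC
  linarith
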